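/- Let σ > 0 and for each k ∈ ℤ define d_{L,k}(σ) = ((−1)^k sinh(σπ)/(σπ²)) · ∫₀^π cos(kt)/cosh(σt) dt. Then for every integer m, ∑_{k∈ℤ} d_{L,k}(σ) · σ²/(σ² + (m − k)²) = δ_{0m}, where δ_{0m} is the Kronecker delta (equal to 1 if m = 0 and 0 otherwise). In other words, the function φ̃_L(t) = ∑_{k∈ℤ} d_{L,k}(σ) · σ²/(σ² + (t − k)²) is the basic nod (interpolating) function for the system of integer shifts of the Cauchy–Lorentz function: φ̃_L(m) = δ_{0m} for all m ∈ ℤ. -/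

import Mathlib

open Real

section LorentzAux
open MeasureTheory intervalIntegral


noncomputable def gC (σ : ℝ) : ℝ → ℂ := fun x => ((Real.cosh (σ * x) : ℝ) : ℂ)

lemma hab : (-π:ℝ) < -π + 2*π := by linarith [pi_pos]

lemma expPiI (k : ℤ) : Complex.exp ((k:ℂ) * (↑π*Complex.I)) = (-1:ℂ)^k := by
  rw [Complex.exp_int_mul, Complex.exp_pi_mul_I]

lemma negOnePow (k : ℤ) : ((-1:ℂ))^(-k) = (-1:ℂ)^k := by
  rw [zpow_neg, ← inv_zpow]; norm_num

lemma fourierCoeffOn_cosh (σ : ℝ) (hσ : 0 < σ) (n : ℤ) :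
    fourierCoeffOn hab (gC σ) n
      = (((-1:ℝ)^n * σ * Real.sinh (σ*π) / (π*(σ^2+(n:ℝ)^2)) : ℝ) : ℂ) := by
  have hπ := pi_pos
  have hb : (-π:ℝ) + 2*π = π := by ring
  have hc1 : (↑σ - ↑n*Complex.I) ≠ 0 := by
    intro h
    have := congrArg Complex.re h
    simp at this
    exact hσ.ne' this
  have hc2 : (-↑σ - ↑n*Complex.I) ≠ 0 := by
    intro h
    have := congrArg Complex.re h
    simp at this
    exact hσ.ne' this
  rw [fourierCoeffOn_eq_integral]
  simp only [fourier_coe_apply]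
  rw [hb]
  have hT : (π:ℝ) - -π = 2*π := by ring
  rw [hT]
  have hcongr : ∀ x ∈ Set.uIcc (-π) π, Complex.exp (2 * ↑π * Complex.I * ↑(-n) * ↑x / ↑(2*π)) • gC σ x
      = (Complex.exp ((↑σ - ↑n*Complex.I) * ↑x) + Complex.exp ((-↑σ - ↑n*Complex.I) * ↑x))/2 := by
    intro x _
    have harg : (2 * ↑π * Complex.I * ↑(-n) * ↑x / ↑(2*π) : ℂ) = (-(↑n*↑x)) * Complex.I := by
      have : ((2*π : ℝ) : ℂ) ≠ 0 := by
        simpa using (by positivity : (2*π : ℝ) ≠ 0)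
      rw [div_eq_iff this]
      push_cast
      ring
    rw [harg]
    show _ * gC σ x = _
    unfold gC
    rw [Real.cosh_eq]
    push_cast
    rw [show ∀ u v : ℂ, Complex.exp u * ((Complex.exp v + Complex.exp (-v))/2)
        = (Complex.exp (v+u) + Complex.exp (-v+u))/2 from by
      intro u v; rw [Complex.exp_add, Complex.exp_add]; ring]
    congr 3 <;> ring
  rw [intervalIntegral.integral_congr hcongr]
  have hint1 : IntervalIntegrable (fun x : ℝ => Complex.exp ((↑σ - ↑n*Complex.I) * ↑x)) volume (-π) π := by
    apply Continuous.intervalIntegrable; fun_prop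
  have hint2 : IntervalIntegrable (fun x : ℝ => Complex.exp ((-↑σ - ↑n*Complex.I) * ↑x)) volume (-π) π := by
    apply Continuous.intervalIntegrable; fun_prop
  rw [show (fun x : ℝ => (Complex.exp ((↑σ - ↑n*Complex.I) * ↑x) + Complex.exp ((-↑σ - ↑n*Complex.I) * ↑x))/2)
      = (fun x : ℝ => (Complex.exp ((↑σ - ↑n*Complex.I) * ↑x) + Complex.exp ((-↑σ - ↑n*Complex.I) * ↑x)) * (1/2)) from by
    funext x; ring]
  rw [intervalIntegral.integral_mul_const, intervalIntegral.integral_add hint1 hint2,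
    integral_exp_mul_complex hc1, integral_exp_mul_complex hc2]
  have e1 : Complex.exp ((↑σ - ↑n*Complex.I) * ↑π) = Complex.exp ↑(σ*π) * (-1:ℂ)^n := by
    rw [show ((↑σ - ↑n*Complex.I) * ↑π : ℂ) = ↑(σ*π) + (-n:ℤ) * (↑π*Complex.I) from by push_cast; ring,
      Complex.exp_add, expPiI, negOnePow]
  have e2 : Complex.exp ((↑σ - ↑n*Complex.I) * ↑(-π)) = Complex.exp (-↑(σ*π)) * (-1:ℂ)^n := by
    rw [show ((↑σ - ↑n*Complex.I) * ↑(-π) : ℂ) = -↑(σ*π) + (n:ℤ) * (↑π*Complex.I) from by push_cast; ring,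
      Complex.exp_add, expPiI]
  have e3 : Complex.exp ((-↑σ - ↑n*Complex.I) * ↑π) = Complex.exp (-↑(σ*π)) * (-1:ℂ)^n := by
    rw [show ((-↑σ - ↑n*Complex.I) * ↑π : ℂ) = -↑(σ*π) + (-n:ℤ) * (↑π*Complex.I) from by push_cast; ring,
      Complex.exp_add, expPiI, negOnePow]
  have e4 : Complex.exp ((-↑σ - ↑n*Complex.I) * ↑(-π)) = Complex.exp ↑(σ*π) * (-1:ℂ)^n := by
    rw [show ((-↑σ - ↑n*Complex.I) * ↑(-π) : ℂ) = ↑(σ*π) + (n:ℤ) * (↑π*Complex.I) from by push_cast; ring,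
      Complex.exp_add, expPiI]
  rw [e1, e2, e3, e4, Real.sinh_eq]
  have hprod : (↑σ - ↑n*Complex.I) * (-↑σ - ↑n*Complex.I) = -(↑σ^2 + (↑n:ℂ)^2) := by
    have : (Complex.I)^2 = -1 := Complex.I_sq
    ring_nf
    rw [this]
    ring
  have hss : ((σ:ℂ)^2 + (↑n:ℂ)^2) ≠ 0 := by
    have : ((σ^2 + (n:ℝ)^2 : ℝ) : ℂ) ≠ 0 := by
      simp only [ne_eq, Complex.ofReal_eq_zero]
      positivity
    push_cast at this
    exact this
  have hπC : ((π:ℝ):ℂ) ≠ 0 := by simp [pi_ne_zero]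
  have hexp : Complex.exp (-↑(σ*π)) = (Complex.exp ↑(σ*π))⁻¹ := by
    rw [← Complex.exp_neg]
  push_cast
  rw [Complex.real_smul]
  push_cast
  field_simp
  ring_nf
  rw [Complex.I_sq]
  ring

lemma summable_phi (σ : ℝ) (hσ : 0 < σ) : Summable (fun k : ℤ => σ^2/(σ^2+(k:ℝ)^2)) := by
  have base : Summable (fun k : ℤ => σ^2 * (1/(k:ℝ)^2)) :=
    (summable_one_div_int_pow.mpr (by norm_num : 1 < 2)).mul_left _
  apply base.of_norm_bounded_eventually
  rw [Filter.eventually_cofinite]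
  apply Set.Finite.subset (Set.finite_singleton (0:ℤ))
  intro k hk
  simp only [Set.mem_setOf_eq, not_le] at hk
  by_contra hk0
  apply absurd hk
  push_neg
  have hk2 : (0:ℝ) < (k:ℝ)^2 := by
    have : (k:ℝ) ≠ 0 := by exact_mod_cast fun h => hk0 (by simpa using h)
    positivity
  rw [Real.norm_of_nonneg (by positivity), mul_one_div]
  apply div_le_div_of_nonneg_left (by positivity) hk2
  linarith [sq_nonneg σ]

noncomputable def rC (σ : ℝ) (n : ℤ) : ℝ := (-1:ℝ)^n * σ * Real.sinh (σ*π) / (π*(σ^2+(n:ℝ)^2))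

lemma summable_rC (σ : ℝ) (hσ : 0 < σ) : Summable (rC σ) := by
  have hs : 0 < Real.sinh (σ*π) := Real.sinh_pos_iff.mpr (by positivity)
  apply ((summable_phi σ hσ).mul_left (Real.sinh (σ*π)/(σ*π))).of_norm_bounded
  intro n
  have hd : 0 < σ^2+(n:ℝ)^2 := by positivity
  rw [Real.norm_eq_abs]
  unfold rC
  rw [abs_div, abs_mul, abs_mul, abs_neg_one_zpow, one_mul,
    abs_of_pos hσ, abs_of_pos hs, abs_of_pos (by positivity : (0:ℝ) < π*(σ^2+(n:ℝ)^2))]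
  apply le_of_eq
  field_simp

lemma keysum (σ : ℝ) (hσ : 0 < σ) (t : ℝ) (ht : t ∈ Set.Ico (-π) π) :
    HasSum (fun n : ℤ => (-1:ℝ)^n * (σ^2/(σ^2+(n:ℝ)^2)) * Real.cos (n*t))
      (Real.cosh (σ*t) * (σ*π/Real.sinh (σ*π))) := by
  haveI : Fact (0 < 2*π) := ⟨by positivity⟩
  have hper : gC σ (-π) = gC σ (-π + 2*π) := by
    unfold gC
    rw [show σ*(-π) = -(σ*π) by ring, Real.cosh_neg, show σ*(-π+2*π) = σ*π by ring]
  have hcont : Continuous (AddCircle.liftIco (2*π) (-π) (gC σ)) :=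
    AddCircle.liftIco_continuous hper (Continuous.continuousOn (by unfold gC; fun_prop))
  set f : C(AddCircle (2*π), ℂ) := ⟨AddCircle.liftIco (2*π) (-π) (gC σ), hcont⟩ with hf
  have hcoeff : ∀ n, fourierCoeff (⇑f) n = ((rC σ n : ℝ) : ℂ) := by
    intro n
    show fourierCoeff (AddCircle.liftIco (2*π) (-π) (gC σ)) n = _
    rw [fourierCoeff_liftIco_eq]
    exact fourierCoeffOn_cosh σ hσ n
  have hsum : Summable (fourierCoeff (⇑f)) := by
    rw [funext hcoeff]
    apply Summable.of_norm
    simpa using (summable_rC σ hσ).abs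
  have hps := has_pointwise_sum_fourier_series_of_summable hsum ((t : ℝ) : AddCircle (2*π))
  have hft : f ((t : ℝ) : AddCircle (2*π)) = ((Real.cosh (σ*t) : ℝ) : ℂ) := by
    show AddCircle.liftIco (2*π) (-π) (gC σ) _ = _
    rw [AddCircle.liftIco_coe_apply]
    · rfl
    · rw [show -π + 2*π = π by ring]; exact ht
  have hre := hps.mapL Complex.reCLM
  have hterm : (fun n : ℤ => Complex.reCLM (fourierCoeff (⇑f) n • fourier n ((t : ℝ) : AddCircle (2*π))))
      = fun n : ℤ => rC σ n * Real.cos (n*t) := by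
    funext n
    rw [hcoeff n, fourier_coe_apply]
    have harg : (2 * ↑π * Complex.I * ↑n * ↑t / ↑(2*π) : ℂ) = ((n*t : ℝ) : ℂ) * Complex.I := by
      rw [div_eq_iff (by simpa using (by positivity : (2*π:ℝ) ≠ 0) : ((2*π:ℝ):ℂ) ≠ 0)]
      push_cast
      ring
    rw [smul_eq_mul, harg]
    show (_ * Complex.exp _).re = _
    rw [Complex.re_ofReal_mul, Complex.exp_ofReal_mul_I_re]
  rw [hterm, hft] at hre
  have hre' : HasSum (fun n : ℤ => rC σ n * Real.cos (n*t)) (Real.cosh (σ*t)) := by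
    have : (Complex.cosh ((σ:ℂ) * (t:ℂ))).re = Real.cosh (σ*t) := by
      rw [show ((σ:ℂ) * (t:ℂ)) = ((σ*t : ℝ):ℂ) by push_cast; ring, Complex.cosh_ofReal_re]
    simpa [this] using hre
  have := hre'.mul_right (σ*π/Real.sinh (σ*π))
  have heq : (fun n : ℤ => rC σ n * Real.cos (n*t) * (σ*π/Real.sinh (σ*π)))
      = fun n : ℤ => (-1:ℝ)^n * (σ^2/(σ^2+(n:ℝ)^2)) * Real.cos (n*t) := by
    funext n
    unfold rC
    have hs : Real.sinh (σ*π) ≠ 0 := (Real.sinh_pos_iff.mpr (by positivity)).ne'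
    have hd : σ^2+(n:ℝ)^2 ≠ 0 := by positivity
    field_simp
  rwa [heq] at this

lemma negOnePowR (k : ℤ) : ((-1:ℝ))^(-k) = (-1:ℝ)^k := by
  rw [zpow_neg, ← inv_zpow]; norm_num

lemma negOnePowSub (m j : ℤ) : ((-1:ℝ))^(m-j) = (-1:ℝ)^m * (-1:ℝ)^j := by
  rw [zpow_sub₀ (by norm_num : (-1:ℝ) ≠ 0), div_eq_mul_inv, ← zpow_neg, negOnePowR]

lemma sinsum (σ : ℝ) (t : ℝ) :
    ∑' n : ℤ, (-1:ℝ)^n * (σ^2/(σ^2+(n:ℝ)^2)) * Real.sin (n*t) = 0 := by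
  set h : ℤ → ℝ := fun n => (-1:ℝ)^n * (σ^2/(σ^2+(n:ℝ)^2)) * Real.sin (n*t) with hh
  have hneg : ∀ n : ℤ, h (-n) = - h n := by
    intro n
    simp only [hh]
    rw [negOnePowR]
    push_cast
    rw [show (-(n:ℝ)) * t = -((n:ℝ)*t) by ring, Real.sin_neg]
    ring
  have h1 : ∑' n, h (Equiv.neg ℤ n) = ∑' n, h n := (Equiv.neg ℤ).tsum_eq h
  have h2 : ∑' n, h (Equiv.neg ℤ n) = - ∑' n, h n := by
    simp only [Equiv.neg_apply]
    rw [funext hneg]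
    exact tsum_neg
  linarith [h1, h2.symm.trans h1]

lemma summable_B (σ : ℝ) (hσ : 0 < σ) (t : ℝ) :
    Summable (fun n : ℤ => (-1:ℝ)^n * (σ^2/(σ^2+(n:ℝ)^2)) * Real.sin (n*t)) := by
  apply (summable_phi σ hσ).of_norm_bounded
  intro n
  rw [Real.norm_eq_abs, abs_mul, abs_mul, abs_neg_one_zpow, one_mul,
    abs_of_nonneg (by positivity : (0:ℝ) ≤ σ^2/(σ^2+(n:ℝ)^2))]
  calc σ^2/(σ^2+(n:ℝ)^2) * |Real.sin (n*t)| ≤ σ^2/(σ^2+(n:ℝ)^2) * 1 :=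
        mul_le_mul_of_nonneg_left (Real.abs_sin_le_one _) (by positivity)
    _ = σ^2/(σ^2+(n:ℝ)^2) := mul_one _

lemma innerSumL (σ : ℝ) (hσ : 0 < σ) (m : ℤ) (t : ℝ) (ht : t ∈ Set.Ioo 0 π) :
    ∑' k : ℤ, ((-1:ℝ)^k * Real.cos (k*t) * (σ^2/(σ^2+((m:ℝ)-(k:ℝ))^2)))
      = (-1:ℝ)^m * Real.cos (m*t) * (Real.cosh (σ*t) * (σ*π/Real.sinh (σ*π))) := by
  have htIco : t ∈ Set.Ico (-π) π := ⟨by linarith [ht.1, pi_pos], ht.2⟩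
  have hA := keysum σ hσ t htIco
  have hB := summable_B σ hσ t
  set A : ℤ → ℝ := fun n => (-1:ℝ)^n * (σ^2/(σ^2+(n:ℝ)^2)) * Real.cos (n*t) with hAdef
  set B : ℤ → ℝ := fun n => (-1:ℝ)^n * (σ^2/(σ^2+(n:ℝ)^2)) * Real.sin (n*t) with hBdef
  set h : ℤ → ℝ := fun k => (-1:ℝ)^k * Real.cos (k*t) * (σ^2/(σ^2+((m:ℝ)-(k:ℝ))^2)) with hhdef
  have key : ∀ j : ℤ, h ((Equiv.subLeft m) j)
      = ((-1:ℝ)^m * Real.cos (m*t)) * A j + ((-1:ℝ)^m * Real.sin (m*t)) * B j := by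
    intro j
    simp only [hhdef, hAdef, hBdef, Equiv.subLeft_apply]
    rw [negOnePowSub]
    have hcast : ((m - j : ℤ) : ℝ) = (m:ℝ) - (j:ℝ) := by push_cast; ring
    rw [hcast]
    rw [show ((m:ℝ) - (j:ℝ)) * t = (m:ℝ)*t - (j:ℝ)*t by ring, Real.cos_sub]
    rw [show (m:ℝ) - ((m:ℝ) - (j:ℝ)) = (j:ℝ) by ring]
    ring
  rw [← (Equiv.subLeft m).tsum_eq h, funext key]
  rw [Summable.tsum_add (hA.summable.mul_left _) (hB.mul_left _), tsum_mul_left, tsum_mul_left,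
    hA.tsum_eq, sinsum σ t]
  ring

lemma integral_cos_ne (m : ℤ) (hm : m ≠ 0) : (∫ t in (0:ℝ)..π, Real.cos ((m:ℝ)*t)) = 0 := by
  have hmr : ((m:ℝ)) ≠ 0 := Int.cast_ne_zero.mpr hm
  rw [intervalIntegral.integral_comp_mul_left (fun x => Real.cos x) hmr]
  simp [integral_cos, Real.sin_int_mul_pi]

end LorentzAux

/-- The coefficients of the basic nod function for the Lorentz system. -/
noncomputable def dL (σ : ℝ) (k : ℤ) : ℝ :=
  ((-1 : ℝ) ^ k * Real.sinh (σ * π) / (σ * π ^ 2)) *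
    ∫ t in (0 : ℝ)..π, Real.cos (k * t) / Real.cosh (σ * t)

set_option maxHeartbeats 1000000 in
/-- With `d_{L,k}(σ) = ((−1)^k sinh(σπ)/(σπ²)) ∫₀^π cos(kt)/cosh(σt) dt`,
the function `φ̃_L(t) = ∑_{k∈ℤ} d_{L,k}(σ)·σ²/(σ²+(t−k)²)` satisfies
`φ̃_L(m) = δ_{0m}` for all integers `m`. -/
theorem lorentz_nod_function (σ : ℝ) (hσ : 0 < σ) (m : ℤ) :
    (∑' k : ℤ, dL σ k * (σ ^ 2 / (σ ^ 2 + ((m : ℝ) - (k : ℝ)) ^ 2))) =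
      if m = 0 then 1 else 0 := by
  have hπ := pi_pos
  have hs : 0 < Real.sinh (σ*π) := Real.sinh_pos_iff.mpr (by positivity)
  set F : ℤ → ℝ → ℝ := fun k t =>
    (Real.sinh (σ*π)/(σ*π^2) * ((-1:ℝ)^k * (σ^2/(σ^2+((m:ℝ)-(k:ℝ))^2))))
      * (Real.cos ((k:ℝ)*t)/Real.cosh (σ*t)) with hFdef
  have hterm : ∀ k : ℤ, dL σ k * (σ ^ 2 / (σ ^ 2 + ((m : ℝ) - (k : ℝ)) ^ 2))
      = ∫ t in Set.Ioc (0:ℝ) π, F k t := by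
    intro k
    rw [show (∫ t in Set.Ioc (0:ℝ) π, F k t) = ∫ t in (0:ℝ)..π, F k t from
      (intervalIntegral.integral_of_le pi_pos.le).symm]
    simp only [hFdef]
    rw [intervalIntegral.integral_const_mul]
    unfold dL
    ring
  -- summability of shifted phi
  have hshift : Summable (fun k : ℤ => σ^2/(σ^2+((m:ℝ)-(k:ℝ))^2)) := by
    apply ((Equiv.subLeft m).summable_iff.mpr (summable_phi σ hσ)).congr
    intro k
    simp only [Function.comp_apply, Equiv.subLeft_apply]
    push_cast
    ring_nf
  have hFcont : ∀ k : ℤ, Continuous (F k) := by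
    intro k
    apply Continuous.mul continuous_const
    exact (Real.continuous_cos.comp (continuous_const.mul continuous_id)).div
      (Real.continuous_cosh.comp (continuous_const.mul continuous_id))
      (fun t => (Real.cosh_pos _).ne')
  have hFint : ∀ k : ℤ, MeasureTheory.Integrable (F k)
      (MeasureTheory.volume.restrict (Set.Ioc (0:ℝ) π)) := by
    intro k
    exact (hFcont k).integrableOn_Ioc
  have hbound : ∀ (k : ℤ) (t : ℝ), ‖F k t‖
      ≤ Real.sinh (σ*π)/(σ*π^2) * (σ^2/(σ^2+((m:ℝ)-(k:ℝ))^2)) := by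
    intro k t
    have hc1 : (1:ℝ) ≤ Real.cosh (σ*t) := Real.one_le_cosh _
    have habs : |Real.cos ((k:ℝ)*t)/Real.cosh (σ*t)| ≤ 1 := by
      rw [abs_div, abs_of_pos (Real.cosh_pos (σ*t))]
      rw [div_le_one (Real.cosh_pos _)]
      calc |Real.cos ((k:ℝ)*t)| ≤ 1 := Real.abs_cos_le_one _
        _ ≤ Real.cosh (σ*t) := hc1
    simp only [hFdef]
    rw [Real.norm_eq_abs, abs_mul, abs_mul, abs_mul, abs_neg_one_zpow, one_mul]
    rw [abs_of_pos (by positivity : (0:ℝ) < Real.sinh (σ*π)/(σ*π^2)),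
      abs_of_pos (by positivity : (0:ℝ) < σ^2/(σ^2+((m:ℝ)-(k:ℝ))^2))]
    calc Real.sinh (σ*π)/(σ*π^2) * (σ^2/(σ^2+((m:ℝ)-(k:ℝ))^2)) * |Real.cos ((k:ℝ)*t)/Real.cosh (σ*t)|
        ≤ Real.sinh (σ*π)/(σ*π^2) * (σ^2/(σ^2+((m:ℝ)-(k:ℝ))^2)) * 1 :=
          mul_le_mul_of_nonneg_left habs (by positivity)
      _ = _ := mul_one _
  have hFsum : Summable (fun k : ℤ => ∫ t in Set.Ioc (0:ℝ) π, ‖F k t‖) := by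
    refine Summable.of_nonneg_of_le
      (f := fun k : ℤ => π * (Real.sinh (σ*π)/(σ*π^2) * (σ^2/(σ^2+((m:ℝ)-(k:ℝ))^2))))
      (fun k => MeasureTheory.integral_nonneg (fun t => norm_nonneg _)) (fun k => ?_)
      (((hshift.mul_left _).mul_left π))
    calc (∫ t in Set.Ioc (0:ℝ) π, ‖F k t‖)
          ≤ ∫ _t in Set.Ioc (0:ℝ) π,
              Real.sinh (σ*π)/(σ*π^2) * (σ^2/(σ^2+((m:ℝ)-(k:ℝ))^2)) := by
            apply MeasureTheory.setIntegral_mono_on (hFint k).norm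
              (MeasureTheory.integrableOn_const (by
                rw [Real.volume_Ioc]; exact ENNReal.ofReal_ne_top))
              measurableSet_Ioc
            exact fun t _ => hbound k t
        _ = π * (Real.sinh (σ*π)/(σ*π^2) * (σ^2/(σ^2+((m:ℝ)-(k:ℝ))^2))) := by
            rw [MeasureTheory.setIntegral_const, Real.volume_real_Ioc_of_le pi_pos.le, smul_eq_mul,
              sub_zero]
  rw [tsum_congr hterm,
    MeasureTheory.integral_tsum_of_summable_integral_norm hFint hFsum]
  have hinner : Set.EqOn (fun t => ∑' k : ℤ, F k t)
      (fun t => ((-1:ℝ)^m / π) * Real.cos ((m:ℝ)*t)) (Set.Ioo 0 π) := by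
    intro t ht
    have hrw : ∀ k : ℤ, F k t = (Real.sinh (σ*π)/(σ*π^2) / Real.cosh (σ*t))
        * ((-1:ℝ)^k * Real.cos ((k:ℝ)*t) * (σ^2/(σ^2+((m:ℝ)-(k:ℝ))^2))) := by
      intro k; simp only [hFdef]; ring
    show (∑' k : ℤ, F k t) = _
    rw [tsum_congr hrw, tsum_mul_left, innerSumL σ hσ m t ht]
    have hcosh : Real.cosh (σ*t) ≠ 0 := (Real.cosh_pos _).ne'
    field_simp
  rw [MeasureTheory.integral_Ioc_eq_integral_Ioo,
    MeasureTheory.setIntegral_congr_fun measurableSet_Ioo hinner]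
  by_cases hm : m = 0
  · subst hm
    rw [if_pos rfl]
    simp only [zpow_zero, Int.cast_zero, zero_mul, Real.cos_zero, mul_one]
    rw [MeasureTheory.setIntegral_const, Real.volume_real_Ioo_of_le pi_pos.le, smul_eq_mul,
      sub_zero]
    field_simp
  · rw [if_neg hm, ← MeasureTheory.integral_Ioc_eq_integral_Ioo,
      show (∫ t in Set.Ioc (0:ℝ) π, ((-1:ℝ)^m / π) * Real.cos ((m:ℝ)*t))
        = ∫ t in (0:ℝ)..π, ((-1:ℝ)^m / π) * Real.cos ((m:ℝ)*t) from
        (intervalIntegral.integral_of_le pi_pos.le).symm,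
      intervalIntegral.integral_const_mul, integral_cos_ne m hm, mul_zero]
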